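/- Let A ∈ {0,1}^{N×k} have linearly independent columns and b ∈ {0,1}^N. Suppose the linear system A x = b has no real solution x ∈ ℝ^k. Then the integer vector ŷ = det(AᵀA)·(I − A(AᵀA)^{-1}Aᵀ)·b satisfies: (1) ŷᵀA = 0; (2) ŷᵀb ≠ 0; (3) ‖ŷ‖_∞ ≤ N^{k+1/2}·k^{k/2}. -/

import Mathlib

open Matrix

/-- Fredholm-alternative-style lemma: if `A ∈ {0,1}^{N×k}` has linearly independent
columns, `b ∈ {0,1}^N`, and `Ax = b` has no real solution, then
`ŷ = det(AᵀA)·(I − A(AᵀA)⁻¹Aᵀ)·b` is an integer vector with `ŷᵀA = 0`, `ŷᵀb ≠ 0`,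
and `‖ŷ‖_∞ ≤ N^{k+1/2}·k^{k/2}`. -/
theorem stmt_4 (N k : ℕ) (A : Matrix (Fin N) (Fin k) ℝ) (b : Fin N → ℝ)
    (hA : ∀ i j, A i j = 0 ∨ A i j = 1)
    (hb : ∀ i, b i = 0 ∨ b i = 1)
    (hcols : LinearIndependent ℝ (fun j : Fin k => Aᵀ j))
    (hnosol : ¬ ∃ x : Fin k → ℝ, A *ᵥ x = b)
    (yhat : Fin N → ℝ)
    (hyhat : yhat = (Aᵀ * A).det • ((1 - A * (Aᵀ * A)⁻¹ * Aᵀ) *ᵥ b)) :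
    (∀ i, ∃ z : ℤ, yhat i = (z : ℝ))
    ∧ yhat ᵥ* A = 0
    ∧ yhat ⬝ᵥ b ≠ 0
    ∧ ∀ i, |yhat i| ≤ (N : ℝ) ^ ((k : ℝ) + 1/2) * (k : ℝ) ^ ((k : ℝ) / 2) := by
  classical
  -- positivity of dot products with self
  have hvv : ∀ {m : ℕ} (v : Fin m → ℝ), v ≠ 0 → 0 < v ⬝ᵥ v := by
    intro m v hv
    rcases lt_or_eq_of_le (Finset.sum_nonneg (fun i _ => mul_self_nonneg (v i)) :
        (0:ℝ) ≤ v ⬝ᵥ v) with h | h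
    · exact h
    · exact absurd ((dotProduct_self_eq_zero).mp h.symm) hv
  -- injectivity of A on vectors
  have hAinj : ∀ x : Fin k → ℝ, A *ᵥ x = 0 → x = 0 := by
    intro x hx
    have h2 : ∑ j, x j • (Aᵀ j) = 0 := by
      funext i
      have := congrFun hx i
      simpa [mulVec, dotProduct, mul_comm] using this
    funext j
    exact Fintype.linearIndependent_iff.mp hcols x h2 j
  -- the Gram matrix is positive definite
  have hPD : (Aᵀ * A).PosDef := by
    refine Matrix.PosDef.of_dotProduct_mulVec_pos (Matrix.isHermitian_conjTranspose_mul_self A) fun x hx => ?_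
    have h1 : star x ⬝ᵥ ((Aᵀ * A) *ᵥ x) = (A *ᵥ x) ⬝ᵥ (A *ᵥ x) := by
      rw [← mulVec_mulVec, dotProduct_mulVec, show (star x : Fin k → ℝ) = x from rfl,
        vecMul_transpose]
    rw [h1]
    exact hvv _ (fun h => hx (hAinj x h))
  have hPSD : (Aᵀ * A).PosSemidef := hPD.posSemidef
  set G := Aᵀ * A with hG
  set d := G.det with hd
  have hdet : 0 < d := hPD.det_pos
  have hunit : IsUnit G.det := hdet.ne'.isUnit
  have hGinv : G * G⁻¹ = 1 := mul_nonsing_inv _ hunit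
  have hGinv' : G⁻¹ * G = 1 := nonsing_inv_mul _ hunit
  set P := A * G⁻¹ * Aᵀ with hP
  set r := (1 - P) *ᵥ b with hr
  have hyr : yhat = d • r := hyhat
  have hAtP : Aᵀ * P = Aᵀ := by
    rw [hP, ← Matrix.mul_assoc, ← Matrix.mul_assoc, ← hG, hGinv, Matrix.one_mul]
  have hAr : Aᵀ *ᵥ r = 0 := by
    rw [hr, mulVec_mulVec, Matrix.mul_sub, Matrix.mul_one, hAtP, sub_self, zero_mulVec]
  have hrA : r ᵥ* A = 0 := by rw [← mulVec_transpose, hAr]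
  have hrW : ∀ w, r ⬝ᵥ (A *ᵥ w) = 0 := by
    intro w; rw [dotProduct_mulVec, hrA, zero_dotProduct]
  have hbr : b = r + A *ᵥ (G⁻¹ *ᵥ (Aᵀ *ᵥ b)) := by
    rw [hr, sub_mulVec, one_mulVec, hP, mulVec_mulVec, mulVec_mulVec]
    abel
  have hr0 : r ≠ 0 := by
    intro h
    rw [h, zero_add] at hbr
    exact hnosol ⟨G⁻¹ *ᵥ (Aᵀ *ᵥ b), hbr.symm⟩
  have hrb : r ⬝ᵥ b = r ⬝ᵥ r := by
    conv_lhs => rw [hbr]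
    rw [dotProduct_add, hrW, add_zero]
  -- N is positive
  have hN : 0 < N := by
    rcases Nat.eq_zero_or_pos N with h | h
    · subst h
      exact absurd ⟨0, funext fun i => i.elim0⟩ hnosol
    · exact h
  have hNpos : (0:ℝ) < N := by exact_mod_cast hN
  refine ⟨?_, ?_, ?_, ?_⟩
  -- (1) integrality
  · have hadj : G.adjugate = d • G⁻¹ := by
      calc G.adjugate = (G⁻¹ * G) * G.adjugate := by rw [hGinv', Matrix.one_mul]
      _ = G⁻¹ * (G * G.adjugate) := by rw [Matrix.mul_assoc]
      _ = G⁻¹ * (d • 1) := by rw [Matrix.mul_adjugate, hd]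
      _ = d • G⁻¹ := by rw [Matrix.mul_smul, Matrix.mul_one]
    have hyM : yhat = (d • (1 : Matrix (Fin N) (Fin N) ℝ) - A * G.adjugate * Aᵀ) *ᵥ b := by
      rw [hyhat, ← smul_mulVec, smul_sub, hadj, Matrix.mul_smul, Matrix.smul_mul]
    set A' : Matrix (Fin N) (Fin k) ℤ := fun i j => if A i j = 1 then 1 else 0 with hA'
    set b' : (Fin N) → ℤ := fun i => if b i = 1 then 1 else 0 with hb'
    have hAc : A = A'.map (Int.cast) := by
      ext i j
      rcases hA i j with h | h <;> simp [hA', Matrix.map, h]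
    have hbc : ∀ i, b i = ((b' i : ℤ) : ℝ) := by
      intro i
      rcases hb i with h | h <;> simp [hb', h]
    have hcast : ∀ (m n p : ℕ) (M : Matrix (Fin m) (Fin n) ℤ) (M₂ : Matrix (Fin n) (Fin p) ℤ),
        (M.map (Int.cast : ℤ → ℝ)) * (M₂.map Int.cast) = (M * M₂).map Int.cast := by
      intro m n p M M₂
      exact (Matrix.map_mul (f := Int.castRingHom ℝ)).symm
    have hGc : G = (A'ᵀ * A').map Int.cast := by
      rw [hG, hAc, ← hcast, Matrix.transpose_map]; rfl
    have hdc : d = (((A'ᵀ * A').det : ℤ) : ℝ) := by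
      rw [hd, hGc]
      exact ((RingHom.map_det (Int.castRingHom ℝ) (A'ᵀ * A')).symm)
    have hadjc : G.adjugate = ((A'ᵀ * A').adjugate).map Int.cast := by
      rw [hGc]
      exact ((RingHom.map_adjugate (Int.castRingHom ℝ) (A'ᵀ * A'))).symm
    intro i
    refine ⟨(A'ᵀ * A').det * b' i - ((A' * (A'ᵀ * A').adjugate * A'ᵀ) *ᵥ b') i, ?_⟩
    rw [hyM]
    have hMc : A * G.adjugate * Aᵀ = (A' * (A'ᵀ * A').adjugate * A'ᵀ).map Int.cast := by
      rw [hAc, hadjc, ← Matrix.transpose_map]; exact (congrArg (· * _) (hcast _ _ _ _ _)).trans (hcast _ _ _ _ _)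
    rw [sub_mulVec]
    simp only [Pi.sub_apply, smul_mulVec, one_mulVec, Pi.smul_apply, smul_eq_mul,
      hMc, hdc, hbc, mulVec, dotProduct, Matrix.map_apply]
    push_cast
    ring
  -- (2) yhat ᵥ* A = 0
  · rw [hyr]
    funext j
    have h := congrFun hrA j
    simp only [vecMul, dotProduct, Pi.smul_apply, smul_eq_mul, Pi.zero_apply] at h ⊢
    simp_rw [mul_assoc, ← Finset.mul_sum, h, mul_zero]
  -- (3) yhat ⬝ᵥ b ≠ 0
  · rw [hyr, smul_dotProduct, hrb, smul_eq_mul]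
    exact mul_ne_zero hdet.ne' (hvv r hr0).ne'
  -- (4) the bound
  · -- determinant bound : d ≤ N ^ k
    have hdet_le : d ≤ (N : ℝ) ^ k := by
      rcases Nat.eq_zero_or_pos k with hk | hk
      · subst hk
        simp [hd, Matrix.det_isEmpty]
      have hk' : (0:ℝ) < k := by exact_mod_cast hk
      set lam := hPSD.1.eigenvalues with hlam
      have hl0 : ∀ i, 0 ≤ lam i := hPSD.eigenvalues_nonneg
      have hdetprod : d = ∏ i, lam i := by
        have := hPSD.1.det_eq_prod_eigenvalues
        simpa using this
      have htr : G.trace ≤ (N : ℝ) * k := by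
        have h1 : ∀ i j, A i j * A i j ≤ 1 := by
          intro i j; rcases hA i j with h | h <;> simp [h]
        calc G.trace = ∑ j, ∑ i, A i j * A i j := by
              simp [hG, Matrix.trace, Matrix.diag, Matrix.mul_apply]
          _ ≤ ∑ j : Fin k, ∑ i : Fin N, (1:ℝ) := by
              apply Finset.sum_le_sum; intro j _
              apply Finset.sum_le_sum; intro i _
              exact h1 i j
          _ = (N : ℝ) * k := by simp [mul_comm]
      have htreq : G.trace = ∑ i, lam i := by
        have := hPSD.1.trace_eq_sum_eigenvalues
        simpa [hlam] using this
      have hgm : ∏ i, (lam i) ^ ((k:ℝ)⁻¹) ≤ ∑ i, (k:ℝ)⁻¹ * lam i := by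
        apply Real.geom_mean_le_arith_mean_weighted
        · intro i _; positivity
        · simp only [Finset.sum_const, Finset.card_univ, Fintype.card_fin, nsmul_eq_mul]
          field_simp
        · intro i _; exact hl0 i
      have hprod : ∏ i, (lam i) ^ ((k:ℝ)⁻¹) = (∏ i, lam i) ^ ((k:ℝ)⁻¹) :=
        Real.finset_prod_rpow _ _ (fun i _ => hl0 i) _
      have hsum : ∑ i, (k:ℝ)⁻¹ * lam i ≤ (N:ℝ) := by
        rw [← Finset.mul_sum, ← htreq, inv_mul_le_iff₀ hk']
        linarith [htr]
      have h1 : (∏ i, lam i) ^ ((k:ℝ)⁻¹) ≤ (N:ℝ) := by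
        rw [← hprod]; exact le_trans hgm hsum
      have hp0 : 0 ≤ ∏ i, lam i := Finset.prod_nonneg (fun i _ => hl0 i)
      calc d = ((∏ i, lam i) ^ ((k:ℝ)⁻¹)) ^ (k:ℕ) := by
            rw [← Real.rpow_natCast ((∏ i, lam i) ^ ((k:ℝ)⁻¹)) k, ← Real.rpow_mul hp0,
              inv_mul_cancel₀ (ne_of_gt hk'), Real.rpow_one, hdetprod]
        _ ≤ (N:ℝ) ^ k := pow_le_pow_left₀ (Real.rpow_nonneg hp0 _) h1 k
    -- residual bound : |r i| ≤ √N
    have hrbound : ∀ i, |r i| ≤ Real.sqrt N := by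
      intro i
      have h1 : r i ^ 2 ≤ r ⬝ᵥ r := by
        rw [dotProduct]
        have h := Finset.single_le_sum (f := fun j => r j * r j)
          (fun j _ => mul_self_nonneg (r j)) (Finset.mem_univ i)
        nlinarith [h]
      have h2 : r ⬝ᵥ r ≤ b ⬝ᵥ b := by
        set w := A *ᵥ (G⁻¹ *ᵥ (Aᵀ *ᵥ b)) with hw
        have hrw : r ⬝ᵥ w = 0 := hrW _
        have hwr : w ⬝ᵥ r = 0 := by rw [dotProduct_comm]; exact hrw
        have hww : 0 ≤ w ⬝ᵥ w := Finset.sum_nonneg (fun j _ => mul_self_nonneg (w j))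
        have hbb : b ⬝ᵥ b = r ⬝ᵥ r + w ⬝ᵥ w := by
          conv_lhs => rw [hbr]
          rw [add_dotProduct, dotProduct_add, dotProduct_add, hrw, hwr]
          ring
        linarith
      have h3 : b ⬝ᵥ b ≤ (N:ℝ) := by
        rw [dotProduct]
        calc ∑ j, b j * b j ≤ ∑ j : Fin N, (1:ℝ) := by
              apply Finset.sum_le_sum; intro j _
              rcases hb j with h | h <;> simp [h]
          _ = (N:ℝ) := by simp
      have h4 : r i ^ 2 ≤ (N:ℝ) := by linarith
      calc |r i| = Real.sqrt (r i ^ 2) := (Real.sqrt_sq_eq_abs _).symm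
        _ ≤ Real.sqrt N := Real.sqrt_le_sqrt h4
    -- put it together
    intro i
    have h5 : |yhat i| ≤ (N:ℝ) ^ k * Real.sqrt N := by
      rw [hyr]
      have : |yhat i| = d * |r i| := by
        rw [hyr]
        simp only [Pi.smul_apply, smul_eq_mul, abs_mul, abs_of_pos hdet]
      rw [← hyr, this]
      have := hrbound i
      have hNk : (0:ℝ) ≤ (N:ℝ) ^ k := by positivity
      calc d * |r i| ≤ d * Real.sqrt N := by
            apply mul_le_mul_of_nonneg_left (hrbound i) hdet.le
        _ ≤ (N:ℝ) ^ k * Real.sqrt N := by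
            apply mul_le_mul_of_nonneg_right hdet_le (Real.sqrt_nonneg _)
    have heq : (N : ℝ) ^ ((k : ℝ) + 1/2) = (N:ℝ) ^ k * Real.sqrt N := by
      rw [Real.rpow_add hNpos, Real.rpow_natCast, Real.sqrt_eq_rpow]
    have hk1 : 1 ≤ (k : ℝ) ^ ((k : ℝ) / 2) := by
      rcases Nat.eq_zero_or_pos k with hk | hk
      · subst hk
        norm_num
      · apply Real.one_le_rpow
        · exact_mod_cast hk
        · positivity
    calc |yhat i| ≤ (N : ℝ) ^ ((k : ℝ) + 1/2) := by rw [heq]; exact h5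
      _ ≤ (N : ℝ) ^ ((k : ℝ) + 1/2) * (k : ℝ) ^ ((k : ℝ) / 2) := by
          apply le_mul_of_one_le_right (Real.rpow_nonneg hNpos.le _) hk1
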